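/- For every prime power q > 3, the maximum size of a set of pairwise non-commuting elements of PGL(2,q) equals q² + q + 1. -/

import Mathlib

/-- A finset of group elements is pairwise non-commuting. -/
def pwNC {G : Type*} [Group G] (s : Finset G) : Prop :=
  (s : Set G).Pairwise fun a b => a * b ≠ b * a

/-- ω(G): the maximum size of a set of pairwise non-commuting elements of `G`. -/
noncomputable def omegaNC (G : Type*) [Group G] : ℕ :=
  sSup {n : ℕ | ∃ s : Finset G, pwNC s ∧ s.card = n}


open Matrix
open scoped LinearAlgebra.Projectivization Classical

namespace OmegaPGL

variable {F : Type*} [Field F]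

abbrev M2' (F : Type*) [Field F] := Matrix (Fin 2) (Fin 2) F
abbrev Vq (F : Type*) [Field F] := M2' F ⧸ (Submodule.span F {(1 : M2' F)})

lemma nonscalar_entries {x : M2' F} (hx : ¬ ∃ c : F, x = c • 1) :
    x 0 1 ≠ 0 ∨ x 1 0 ≠ 0 ∨ x 0 0 ≠ x 1 1 := by
  by_contra h
  push_neg at h
  obtain ⟨h1, h2, h3⟩ := h
  exact hx ⟨x 0 0, by ext i j; fin_cases i <;> fin_cases j <;>
    simp [Matrix.one_apply, h1, h2, h3.symm]⟩

set_option linter.unreachableTactic false in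
set_option linter.unusedTactic false in
set_option linter.unnecessarySeqFocus false in
lemma mem_span_of_commute {x y : M2' F}
    (hx : ¬ ∃ c : F, x = c • 1) (h : x * y = y * x) :
    ∃ α β : F, y = α • 1 + β • x := by
  have hE : ∀ i j, x i 0 * y 0 j + x i 1 * y 1 j = y i 0 * x 0 j + y i 1 * x 1 j := by
    intro i j
    have := congrFun (congrFun h i) j
    simpa [Matrix.mul_apply, Fin.sum_univ_two] using this
  have E00 := hE 0 0
  have E01 := hE 0 1
  have E10 := hE 1 0
  rcases eq_or_ne (x 0 1) 0 with hb | hb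
  rotate_left
  · refine ⟨y 0 0 - (y 0 1 / x 0 1) * x 0 0, y 0 1 / x 0 1, ?_⟩
    ext i j
    fin_cases i <;> fin_cases j <;>
      (simp only [Matrix.add_apply, Matrix.smul_apply, Matrix.one_apply,
        Fin.isValue, smul_eq_mul] <;> norm_num <;> field_simp <;>
       try first
        | linear_combination E00 | linear_combination -E00
        | linear_combination E01 | linear_combination -E01
        | linear_combination 2 * E01 | linear_combination -2 * E01
        | linear_combination E10 | linear_combination -E10)
  rcases eq_or_ne (x 1 0) 0 with hc | hc
  rotate_left
  · refine ⟨y 0 0 - (y 1 0 / x 1 0) * x 0 0, y 1 0 / x 1 0, ?_⟩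
    ext i j
    fin_cases i <;> fin_cases j <;>
      (simp only [Matrix.add_apply, Matrix.smul_apply, Matrix.one_apply,
        Fin.isValue, smul_eq_mul] <;> norm_num <;> field_simp <;>
       try first
        | linear_combination E00 | linear_combination -E00
        | linear_combination E01 | linear_combination -E01
        | linear_combination E10 | linear_combination -E10
        | linear_combination 2 * E10 | linear_combination -2 * E10)
  · have had : x 0 0 ≠ x 1 1 := by
      rcases nonscalar_entries hx with h' | h' | h' <;>
        first | exact absurd hb h' | exact absurd hc h' | exact h'
    have hd : x 0 0 - x 1 1 ≠ 0 := sub_ne_zero.2 had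
    have hq : y 0 1 = 0 := by
      have : y 0 1 * (x 0 0 - x 1 1) = 0 := by linear_combination E01 - y 1 1 * hb + y 0 0 * hb
      exact (mul_eq_zero.1 this).resolve_right hd
    have hr : y 1 0 = 0 := by
      have : y 1 0 * (x 0 0 - x 1 1) = 0 := by linear_combination -E10 - y 1 1 * hc + y 0 0 * hc
      exact (mul_eq_zero.1 this).resolve_right hd
    refine ⟨y 0 0 - ((y 0 0 - y 1 1) / (x 0 0 - x 1 1)) * x 0 0,
      (y 0 0 - y 1 1) / (x 0 0 - x 1 1), ?_⟩
    ext i j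
    fin_cases i <;> fin_cases j <;>
      simp only [Matrix.add_apply, Matrix.smul_apply, Matrix.one_apply,
        Fin.isValue, smul_eq_mul] <;> norm_num [hb, hc, hq, hr] <;> field_simp <;> ring

noncomputable def u1 : Matrix.GeneralLinearGroup (Fin 2) F :=
  ⟨!![1,1;0,1], !![1,-1;0,1], by norm_num [Matrix.mul_fin_two, ← Matrix.one_fin_two],
    by norm_num [Matrix.mul_fin_two, ← Matrix.one_fin_two]⟩

noncomputable def u2 : Matrix.GeneralLinearGroup (Fin 2) F :=
  ⟨!![1,0;1,1], !![1,0;-1,1], by norm_num [Matrix.mul_fin_two, ← Matrix.one_fin_two],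
    by norm_num [Matrix.mul_fin_two, ← Matrix.one_fin_two]⟩

lemma scalar_mem_center {z : Matrix.GeneralLinearGroup (Fin 2) F}
    (h : ∃ c : F, (z : M2' F) = c • 1) :
    z ∈ Subgroup.center (Matrix.GeneralLinearGroup (Fin 2) F) := by
  obtain ⟨c, hc⟩ := h
  rw [Subgroup.mem_center_iff]
  intro g
  ext i j
  show ((g : M2' F) * (z : M2' F)) i j = ((z : M2' F) * (g : M2' F)) i j
  rw [hc]
  simp [Matrix.smul_apply]

lemma nonscalar_u1 : ¬ ∃ c : F, ((u1 : Matrix.GeneralLinearGroup (Fin 2) F) : M2' F) = c • 1 := by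
  rintro ⟨c, hc⟩
  have h1 : ((u1 : Matrix.GeneralLinearGroup (Fin 2) F) : M2' F) 0 1
      = (c • (1 : M2' F)) 0 1 := by rw [hc]
  simp [u1, Matrix.one_apply] at h1

lemma nonscalar_u2 : ¬ ∃ c : F, ((u2 : Matrix.GeneralLinearGroup (Fin 2) F) : M2' F) = c • 1 := by
  rintro ⟨c, hc⟩
  have h1 : ((u2 : Matrix.GeneralLinearGroup (Fin 2) F) : M2' F) 1 0
      = (c • (1 : M2' F)) 1 0 := by rw [hc]
  simp [u2, Matrix.one_apply] at h1

lemma center_scalar {z : Matrix.GeneralLinearGroup (Fin 2) F}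
    (h : z ∈ Subgroup.center (Matrix.GeneralLinearGroup (Fin 2) F)) :
    ∃ c : F, (z : M2' F) = c • 1 := by
  rw [Subgroup.mem_center_iff] at h
  have h1 : ((u1 : Matrix.GeneralLinearGroup (Fin 2) F) : M2' F) * (z : M2' F)
      = (z : M2' F) * ((u1 : Matrix.GeneralLinearGroup (Fin 2) F) : M2' F) := by
    have := congrArg Units.val (h u1)
    simpa [Units.val_mul] using this
  have h2 : ((u2 : Matrix.GeneralLinearGroup (Fin 2) F) : M2' F) * (z : M2' F)
      = (z : M2' F) * ((u2 : Matrix.GeneralLinearGroup (Fin 2) F) : M2' F) := by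
    have := congrArg Units.val (h u2)
    simpa [Units.val_mul] using this
  obtain ⟨α, β, hz1⟩ := mem_span_of_commute nonscalar_u1 h1
  obtain ⟨α', β', hz2⟩ := mem_span_of_commute nonscalar_u2 h2
  have e1 : (z : M2' F) 0 1 = β := by
    rw [hz1]; simp [u1, Matrix.one_apply]
  have e2 : (z : M2' F) 0 1 = 0 := by
    rw [hz2]; simp [u2, Matrix.one_apply]
  refine ⟨α + β, ?_⟩
  rw [hz1]
  have hβ : β = 0 := e1.symm.trans e2
  ext i j
  fin_cases i <;> fin_cases j <;> simp [u1, Matrix.one_apply, hβ]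

noncomputable instance [Fintype F] : Fintype (Vq F) := Fintype.ofFinite _
noncomputable instance [Fintype F] : Fintype (ℙ F (Vq F)) :=
  haveI : Finite {v : Vq F // v ≠ 0} := Subtype.finite
  haveI : Finite (ℙ F (Vq F)) := Quotient.finite _
  Fintype.ofFinite _

lemma finrank_Vq : Module.finrank F (Vq F) = 3 := by
  have h := Submodule.finrank_quotient_add_finrank (Submodule.span F {(1 : M2' F)})
  have h1 : Module.finrank F (Submodule.span F {(1 : M2' F)}) = 1 :=
    finrank_span_singleton one_ne_zero
  have h2 : Module.finrank F (M2' F) = 4 := by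
    rw [Module.finrank_matrix]
    simp
  rw [h1, h2] at h
  convert_to Module.finrank F (M2' F ⧸ (Submodule.span F {(1 : M2' F)})) = 3 using 2
  omega

lemma card_Vq [Fintype F] : Fintype.card (Vq F) = Fintype.card F ^ 3 := by
  rw [Module.card_eq_pow_finrank (K := F), finrank_Vq]

noncomputable def fiberEquiv [Fintype F] (p : ℙ F (Vq F)) :
    Fˣ ≃ {v : {v : Vq F // v ≠ 0} // Projectivization.mk' F v = p} := by
  apply Equiv.ofBijective (fun u => ⟨⟨(u : F) • p.rep,
      smul_ne_zero (Units.ne_zero u) p.rep_nonzero⟩, by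
    simp only [Projectivization.mk'_eq_mk]
    conv_rhs => rw [← p.mk_rep]
    exact (Projectivization.mk_eq_mk_iff F _ _ _ p.rep_nonzero).2 ⟨u, rfl⟩⟩)
  constructor
  · intro u u' huu
    have h : (u : F) • p.rep = (u' : F) • p.rep := by
      have := congrArg
        (fun z => ((z : {v : {v : Vq F // v ≠ 0} // _}) : {v : Vq F // v ≠ 0}).1) huu
      simpa using this
    have := sub_eq_zero.2 h
    rw [← sub_smul] at this
    rcases smul_eq_zero.1 this with h' | h'
    · exact Units.ext (sub_eq_zero.1 h')
    · exact absurd h' p.rep_nonzero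
  · rintro ⟨⟨v, hv⟩, hvp⟩
    simp only [Projectivization.mk'_eq_mk] at hvp
    rw [← p.mk_rep, Projectivization.mk_eq_mk_iff] at hvp
    obtain ⟨a, ha⟩ := hvp
    refine ⟨a, ?_⟩
    apply Subtype.ext
    apply Subtype.ext
    exact ha

lemma card_proj [Fintype F] (hq : 3 < Fintype.card F) :
    Fintype.card (ℙ F (Vq F)) = Fintype.card F ^ 2 + Fintype.card F + 1 := by
  have hcard1 : Fintype.card {v : Vq F // v ≠ 0} = Fintype.card F ^ 3 - 1 := by
    rw [Fintype.card_subtype_compl, card_Vq, Fintype.card_subtype_eq]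
  have hcard2 : Fintype.card {v : Vq F // v ≠ 0}
      = Fintype.card (ℙ F (Vq F)) * (Fintype.card F - 1) := by
    rw [← Fintype.card_congr (Equiv.sigmaFiberEquiv (Projectivization.mk' F)),
      Fintype.card_sigma]
    rw [Finset.sum_congr rfl (fun p _ => (Fintype.card_congr (fiberEquiv p)).symm)]
    simp [Finset.sum_const, Fintype.card_units, mul_comm]
  have hq1 : 1 ≤ Fintype.card F := by omega
  have hq3 : 1 ≤ Fintype.card F ^ 3 := Nat.one_le_pow _ _ (by omega)
  have key : Fintype.card (ℙ F (Vq F)) * (Fintype.card F - 1)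
      = (Fintype.card F ^ 2 + Fintype.card F + 1) * (Fintype.card F - 1) := by
    rw [← hcard2, hcard1]
    zify [hq1, hq3]
    ring
  exact Nat.eq_of_mul_eq_mul_right (by omega) key

lemma mkq_eq_zero_iff {x : M2' F} :
    (Submodule.Quotient.mk x : Vq F) = 0 ↔ ∃ c : F, x = c • 1 := by
  rw [Submodule.Quotient.mk_eq_zero, Submodule.mem_span_singleton]
  constructor
  · rintro ⟨a, ha⟩; exact ⟨a, ha.symm⟩
  · rintro ⟨c, hc⟩; exact ⟨c, hc.symm⟩

lemma mkq_ne_zero {x : M2' F} (hx : ¬ ∃ c : F, x = c • 1) :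
    (Submodule.Quotient.mk x : Vq F) ≠ 0 :=
  fun h => hx (mkq_eq_zero_iff.1 h)

/-- the projective point of a nonscalar matrix -/
noncomputable def ptm (x : M2' F) (hx : ¬ ∃ c : F, x = c • 1) : ℙ F (Vq F) :=
  Projectivization.mk F (Submodule.Quotient.mk x) (mkq_ne_zero hx)

lemma mkq_affine (x : M2' F) (α β : F) :
    (Submodule.Quotient.mk (α • 1 + β • x) : Vq F) = β • Submodule.Quotient.mk x := by
  have h1 : (Submodule.Quotient.mk (1 : M2' F) : Vq F) = 0 :=
    mkq_eq_zero_iff.2 ⟨1, (one_smul F (1 : M2' F)).symm⟩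
  rw [← Submodule.mkQ_apply, map_add, _root_.map_smul, _root_.map_smul, Submodule.mkQ_apply,
    Submodule.mkQ_apply, h1, smul_zero, zero_add]

lemma ptm_eq_of_commute {x y : M2' F} (hx : ¬ ∃ c : F, x = c • 1) (hy : ¬ ∃ c : F, y = c • 1)
    (h : x * y = y * x) : ptm x hx = ptm y hy := by
  obtain ⟨α, β, hxy⟩ := mem_span_of_commute hx h
  have hβ : β ≠ 0 := by
    rintro rfl
    exact hy ⟨α, by simpa using hxy⟩
  unfold ptm
  rw [Projectivization.mk_eq_mk_iff' F _ _ (mkq_ne_zero hx) (mkq_ne_zero hy)]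
  refine ⟨β⁻¹, ?_⟩
  rw [hxy, mkq_affine, smul_smul, inv_mul_cancel₀ hβ, one_smul]

lemma commute_of_ptm_eq {x y : M2' F} (hx : ¬ ∃ c : F, x = c • 1) (hy : ¬ ∃ c : F, y = c • 1)
    (h : ptm x hx = ptm y hy) : x * y = y * x := by
  unfold ptm at h
  rw [Projectivization.mk_eq_mk_iff' F _ _ (mkq_ne_zero hx) (mkq_ne_zero hy)] at h
  obtain ⟨a, ha⟩ := h
  have : (Submodule.Quotient.mk (x - a • y) : Vq F) = 0 := by
    rw [← Submodule.mkQ_apply, map_sub, _root_.map_smul]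
    simpa [Submodule.mkQ_apply] using sub_eq_zero.2 ha.symm
  obtain ⟨c, hc⟩ := mkq_eq_zero_iff.1 this
  have hx' : x = c • 1 + a • y := sub_eq_iff_eq_add.1 hc
  rw [hx']
  ext i j
  simp [Matrix.add_mul, Matrix.mul_add, Matrix.smul_mul, Matrix.mul_smul]

open Polynomial in
lemma exists_good [Fintype F] (hq : 3 < Fintype.card F) (p : ℙ F (Vq F)) :
    ∃ x : M2' F, IsUnit x.det ∧ ((2:F) ≠ 0 → x.trace ≠ 0) ∧
      ∃ hx : ¬ ∃ c : F, x = c • 1, ptm x hx = p := by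
  obtain ⟨m, hm⟩ : ∃ m : M2' F, (Submodule.Quotient.mk m : Vq F) = p.rep :=
    Submodule.mkQ_surjective _ p.rep
  set f : F[X] := X ^ 2 + C (m 0 0 + m 1 1) * X + C (m 0 0 * m 1 1 - m 0 1 * m 1 0) with hf
  have hdeg : f.natDegree = 2 := by
    have := Polynomial.natDegree_quadratic (a := (1:F)) (b := m 0 0 + m 1 1)
      (c := m 0 0 * m 1 1 - m 0 1 * m 1 0) one_ne_zero
    simpa [hf] using this
  have hfne : f ≠ 0 := fun h => by simp [h] at hdeg
  set S : Finset F := f.roots.toFinset ∪ (if (2:F) = 0 then ∅ else {-(m 0 0 + m 1 1) / 2}) with hS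
  have hScard : S.card ≤ 3 := by
    refine le_trans (Finset.card_union_le _ _) ?_
    have h1 : f.roots.toFinset.card ≤ 2 := by
      refine le_trans (Multiset.toFinset_card_le _) ?_
      have := Polynomial.card_roots' f
      omega
    have h2 : (if (2:F) = 0 then (∅ : Finset F) else {-(m 0 0 + m 1 1) / 2}).card ≤ 1 := by
      split <;> simp
    omega
  have hnsub : ¬ (Finset.univ ⊆ S) := fun hsub => by
    have := Finset.card_le_card hsub
    rw [Finset.card_univ] at this
    omega
  obtain ⟨c, -, hc⟩ := Finset.not_subset.1 hnsub
  have hcroots : c ∉ f.roots.toFinset := fun h => hc (Finset.mem_union_left _ h)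
  have hctr : (2:F) ≠ 0 → c ∉ ({-(m 0 0 + m 1 1) / 2} : Finset F) := fun h2 h => by
    refine hc (Finset.mem_union_right _ ?_)
    rw [if_neg h2]
    exact h
  refine ⟨m + c • 1, ?_, ?_, ?_⟩
  · -- determinant is nonzero
    have hev : (m + c • 1).det = f.eval c := by
      simp only [Matrix.det_fin_two, Matrix.add_apply, Matrix.smul_apply, Matrix.one_apply,
        hf, Polynomial.eval_add, Polynomial.eval_mul, Polynomial.eval_pow, Polynomial.eval_X,
        Polynomial.eval_C]
      norm_num
      ring
    rw [isUnit_iff_ne_zero, hev]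
    intro h0
    exact hcroots (Multiset.mem_toFinset.2 ((Polynomial.mem_roots hfne).2 h0))
  · -- trace
    intro h2 htr0
    have : (m + c • 1).trace = m 0 0 + m 1 1 + 2 * c := by
      simp only [Matrix.trace_fin_two, Matrix.add_apply, Matrix.smul_apply, Matrix.one_apply]
      norm_num
      ring
    rw [this] at htr0
    refine hctr h2 (Finset.mem_singleton.2 ?_)
    field_simp
    linear_combination htr0
  · -- point
    have hmk : (Submodule.Quotient.mk (m + c • 1) : Vq F) = p.rep := by
      rw [← Submodule.mkQ_apply, map_add, _root_.map_smul, Submodule.mkQ_apply,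
        Submodule.mkQ_apply, mkq_eq_zero_iff.2 ⟨1, (one_smul F (1 : M2' F)).symm⟩,
        smul_zero, add_zero, hm]
    have hns : ¬ ∃ cc : F, m + c • 1 = cc • 1 := by
      intro hsc
      exact p.rep_nonzero (hmk ▸ mkq_eq_zero_iff.2 hsc)
    refine ⟨hns, ?_⟩
    unfold ptm
    have : Projectivization.mk F p.rep p.rep_nonzero = p := p.mk_rep
    rw [← this]
    rw [Projectivization.mk_eq_mk_iff' F _ _ (mkq_ne_zero hns) p.rep_nonzero]
    exact ⟨1, by rw [one_smul, hmk]⟩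

section GLlayer

local notation "GL2" => Matrix.GeneralLinearGroup (Fin 2) F
local notation "PGL2" => Matrix.GeneralLinearGroup (Fin 2) F ⧸
  Subgroup.center (Matrix.GeneralLinearGroup (Fin 2) F)

lemma quot_comm_of_comm {g h : GL2} (hc : (g : M2' F) * (h : M2' F) = (h : M2' F) * (g : M2' F)) :
    (QuotientGroup.mk g * QuotientGroup.mk h : PGL2) = QuotientGroup.mk h * QuotientGroup.mk g := by
  have : g * h = h * g := Units.ext hc
  rw [← QuotientGroup.mk_mul, ← QuotientGroup.mk_mul, this]

lemma scalar_rel_of_quot_comm {g h : GL2}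
    (hq : (QuotientGroup.mk g * QuotientGroup.mk h : PGL2)
      = QuotientGroup.mk h * QuotientGroup.mk g) :
    ∃ c : F, (h : M2' F) * (g : M2' F) = c • ((g : M2' F) * (h : M2' F)) := by
  rw [← QuotientGroup.mk_mul, ← QuotientGroup.mk_mul] at hq
  have hz : (g * h)⁻¹ * (h * g) ∈ Subgroup.center GL2 := QuotientGroup.eq.1 hq
  obtain ⟨c, hc⟩ := center_scalar hz
  refine ⟨c, ?_⟩
  have : h * g = (g * h) * ((g * h)⁻¹ * (h * g)) := by group
  have hval := congrArg Units.val this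
  have h0 : (h : M2' F) * (g : M2' F) = ((h * g : GL2) : M2' F) := rfl
  rw [h0, hval]
  show ((g * h : GL2) : M2' F) * (((g * h)⁻¹ * (h * g) : GL2) : M2' F) = _
  rw [hc, mul_smul_comm, mul_one]
  rfl

lemma comm_of_scalar_rel {g h : GL2} {c : F}
    (hrel : (h : M2' F) * (g : M2' F) = c • ((g : M2' F) * (h : M2' F)))
    (htr : (2:F) ≠ 0 → Matrix.trace (g : M2' F) ≠ 0) :
    (g : M2' F) * (h : M2' F) = (h : M2' F) * (g : M2' F) := by
  by_cases hc1 : c = 1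
  · rw [hrel, hc1, one_smul]
  exfalso
  by_cases h2 : (2:F) = 0
  · -- characteristic 2 : use determinants
    have hdet := congrArg Matrix.det hrel
    rw [Matrix.det_smul, Matrix.det_mul, Matrix.det_mul] at hdet
    have hgd : (g : M2' F).det ≠ 0 := by
      have := Matrix.isUnit_iff_isUnit_det (g : M2' F)
      exact (isUnit_iff_ne_zero.1 (this.1 g.isUnit))
    have hhd : (h : M2' F).det ≠ 0 := by
      have := Matrix.isUnit_iff_isUnit_det (h : M2' F)
      exact (isUnit_iff_ne_zero.1 (this.1 h.isUnit))
    have hc2 : c ^ 2 = 1 := by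
      field_simp at hdet
      have : (g : M2' F).det * (h : M2' F).det * 1
          = (g : M2' F).det * (h : M2' F).det * c ^ (2:ℕ) := by
        rw [mul_one]
        rw [Fintype.card_fin] at hdet
        linear_combination (g : M2' F).det * (h : M2' F).det * hdet
      have := mul_left_cancel₀ (mul_ne_zero hgd hhd) this
      simp [this]
    have : (c - 1)^2 = 0 := by linear_combination hc2 + (1 - c) * h2
    exact hc1 (sub_eq_zero.1 (pow_eq_zero_iff (n := 2) (by norm_num) |>.1 this))
  · -- odd characteristic : use traces
    have htrg := htr h2
    have hkey : Matrix.trace ((h : M2' F) * (g : M2' F) * ((h⁻¹ : GL2) : M2' F))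
        = Matrix.trace (g : M2' F) := by
      rw [Matrix.trace_mul_comm]
      rw [← Matrix.mul_assoc]
      have : ((h⁻¹ : GL2) : M2' F) * (h : M2' F) = 1 := by
        have := congrArg Units.val (inv_mul_cancel h)
        exact this
      rw [this, Matrix.one_mul]
    rw [hrel, Matrix.smul_mul, Matrix.trace_smul] at hkey
    have : (g : M2' F) * (h : M2' F) * ((h⁻¹ : GL2) : M2' F) = (g : M2' F) := by
      rw [Matrix.mul_assoc]
      have : (h : M2' F) * ((h⁻¹ : GL2) : M2' F) = 1 := by
        have := congrArg Units.val (mul_inv_cancel h)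
        exact this
      rw [this, Matrix.mul_one]
    rw [this] at hkey
    have hfac : (c - 1) * Matrix.trace (g : M2' F) = 0 := by
      have : c • Matrix.trace (g : M2' F) = c * Matrix.trace (g : M2' F) := rfl
      rw [this] at hkey
      linear_combination hkey
    rcases mul_eq_zero.1 hfac with h' | h'
    · exact hc1 (sub_eq_zero.1 h')
    · exact htrg h'

end GLlayer

end OmegaPGL

open OmegaPGL in
open scoped LinearAlgebra.Projectivization in
theorem stmt4 (F : Type*) [Field F] [Fintype F] (hq : 3 < Fintype.card F) :
    omegaNC (Matrix.GeneralLinearGroup (Fin 2) F ⧸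
      Subgroup.center (Matrix.GeneralLinearGroup (Fin 2) F)) =
      Fintype.card F ^ 2 + Fintype.card F + 1 := by
  classical
  have hN : Fintype.card (ℙ F (Vq F)) = Fintype.card F ^ 2 + Fintype.card F + 1 :=
    card_proj hq
  haveI hPne : Nonempty (ℙ F (Vq F)) :=
    Fintype.card_pos_iff.1 (by rw [hN]; positivity)
  -- upper bound
  have upper : ∀ s : Finset (Matrix.GeneralLinearGroup (Fin 2) F ⧸
      Subgroup.center (Matrix.GeneralLinearGroup (Fin 2) F)), pwNC s →
      s.card ≤ Fintype.card F ^ 2 + Fintype.card F + 1 := by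
    intro s hs
    by_cases hone : s.card ≤ 1
    · have : 4 ≤ Fintype.card F := hq
      nlinarith
    push_neg at hone
    have hns : ∀ a ∈ s, ¬ ∃ c : F, ((Quotient.out a : Matrix.GeneralLinearGroup (Fin 2) F) :
        M2' F) = c • 1 := by
      intro a ha hsc
      obtain ⟨b, hb, hba⟩ := Finset.exists_mem_ne hone a
      obtain ⟨c, hc⟩ := hsc
      have hcomm : ((Quotient.out a : Matrix.GeneralLinearGroup (Fin 2) F) : M2' F) *
          ((Quotient.out b : Matrix.GeneralLinearGroup (Fin 2) F) : M2' F) =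
          ((Quotient.out b : Matrix.GeneralLinearGroup (Fin 2) F) : M2' F) *
          ((Quotient.out a : Matrix.GeneralLinearGroup (Fin 2) F) : M2' F) := by
        rw [hc]
        ext i j
        simp [Matrix.smul_mul, Matrix.mul_smul]
      have hcq := quot_comm_of_comm (F := F) hcomm
      rw [QuotientGroup.out_eq', QuotientGroup.out_eq'] at hcq
      exact hs ha hb hba.symm hcq
    set f : (Matrix.GeneralLinearGroup (Fin 2) F ⧸
        Subgroup.center (Matrix.GeneralLinearGroup (Fin 2) F)) → ℙ F (Vq F) :=
      fun a => if h : ¬ ∃ c : F, ((Quotient.out a : Matrix.GeneralLinearGroup (Fin 2) F) :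
        M2' F) = c • 1 then ptm _ h else Classical.arbitrary _ with hf
    have hinj : Set.InjOn f s := by
      intro a ha b hb hfab
      by_contra hab
      rw [hf] at hfab
      simp only [dif_pos (hns a ha), dif_pos (hns b hb)] at hfab
      have hcm := commute_of_ptm_eq (hns a ha) (hns b hb) hfab
      have hcq := quot_comm_of_comm (F := F) hcm
      rw [QuotientGroup.out_eq', QuotientGroup.out_eq'] at hcq
      exact hs ha hb hab hcq
    have := Finset.card_le_card_of_injOn f (fun a _ => Finset.mem_univ _) hinj
    rwa [Finset.card_univ, hN] at this
  -- lower bound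
  have lower : ∃ s : Finset (Matrix.GeneralLinearGroup (Fin 2) F ⧸
      Subgroup.center (Matrix.GeneralLinearGroup (Fin 2) F)),
      pwNC s ∧ s.card = Fintype.card F ^ 2 + Fintype.card F + 1 := by
    choose x hdet htr hns hpt using exists_good (F := F) hq
    set g : ℙ F (Vq F) → Matrix.GeneralLinearGroup (Fin 2) F :=
      fun p => ((Matrix.isUnit_iff_isUnit_det (x p)).2 (hdet p)).unit with hg
    have hgval : ∀ p, ((g p) : M2' F) = x p :=
      fun p => IsUnit.unit_spec _
    have noncomm : ∀ p p', p ≠ p' →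
        (QuotientGroup.mk (g p) * QuotientGroup.mk (g p') :
          Matrix.GeneralLinearGroup (Fin 2) F ⧸
            Subgroup.center (Matrix.GeneralLinearGroup (Fin 2) F)) ≠
        QuotientGroup.mk (g p') * QuotientGroup.mk (g p) := by
      intro p p' hne heq
      obtain ⟨c, hc⟩ := scalar_rel_of_quot_comm (F := F) heq
      have hcomm := comm_of_scalar_rel (F := F) hc (by rw [hgval]; exact htr p)
      rw [hgval, hgval] at hcomm
      have hpp := ptm_eq_of_commute (hns p) (hns p') hcomm
      rw [hpt p, hpt p'] at hpp
      exact hne hpp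
    set f : ℙ F (Vq F) → (Matrix.GeneralLinearGroup (Fin 2) F ⧸
        Subgroup.center (Matrix.GeneralLinearGroup (Fin 2) F)) :=
      fun p => QuotientGroup.mk (g p) with hfdef
    have hfinj : Function.Injective f := by
      intro p p' h
      by_contra hne
      have h' : (QuotientGroup.mk (g p) : Matrix.GeneralLinearGroup (Fin 2) F ⧸
          Subgroup.center (Matrix.GeneralLinearGroup (Fin 2) F)) = QuotientGroup.mk (g p') := h
      exact noncomm p p' hne (by rw [h'])
    refine ⟨Finset.image f Finset.univ, ?_, ?_⟩
    · intro a ha b hb hab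
      obtain ⟨p, -, rfl⟩ := Finset.mem_image.1 (Finset.mem_coe.1 ha)
      obtain ⟨p', -, rfl⟩ := Finset.mem_image.1 (Finset.mem_coe.1 hb)
      have hne : p ≠ p' := fun h => hab (by rw [h])
      exact noncomm p p' hne
    · rw [Finset.card_image_of_injective _ hfinj, Finset.card_univ, hN]
  -- conclude
  unfold omegaNC
  apply le_antisymm
  · refine csSup_le ⟨0, ∅, by simp [pwNC], by simp⟩ ?_
    rintro n ⟨s, hsp, rfl⟩
    exact upper s hsp
  · obtain ⟨s, hsp, hcard⟩ := lower
    refine le_csSup ⟨Fintype.card F ^ 2 + Fintype.card F + 1, ?_⟩ ⟨s, hsp, hcard⟩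
    rintro n ⟨s', hsp', rfl⟩
    exact upper s' hsp'
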